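/- For any invertible 3×3 matrix M and vector t ∈ ℝ³, the identity [M⁻¹ t]ₓ = det(M⁻¹) · Mᵀ [t]ₓ M holds. -/

import Mathlib

open Matrix

/-- The skew-symmetric matrix `[t]ₓ` of a 3-vector. -/
def skew {R : Type*} [CommRing R] (t : Fin 3 → R) : Matrix (Fin 3) (Fin 3) R :=
  !![0, -t 2, t 1; t 2, 0, -t 0; -t 1, t 0, 0]

lemma skew_adj {R : Type*} [CommRing R] (M : Matrix (Fin 3) (Fin 3) R) (t : Fin 3 → R) :
    Mᵀ * skew t * M = skew ((adjugate M).mulVec t) := by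
  have hadj := adjugate_fin_three M
  ext i j
  fin_cases i <;> fin_cases j <;>
    simp [skew, mul_apply, mulVec, dotProduct, hadj, Fin.sum_univ_three, transpose_apply] <;>
    ring

lemma skew_smul {R : Type*} [CommRing R] (c : R) (t : Fin 3 → R) :
    skew (c • t) = c • skew t := by
  ext i j
  fin_cases i <;> fin_cases j <;> simp [skew] <;> ring

theorem stmt_16 (M : Matrix (Fin 3) (Fin 3) ℝ) (hM : IsUnit M.det) (t : Fin 3 → ℝ) :
    skew (M⁻¹.mulVec t) = (M⁻¹).det • (Mᵀ * skew t * M) := by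
  rw [skew_adj, inv_def, smul_mulVec, skew_smul, det_smul, det_adjugate]
  have h : M.det ≠ 0 := hM.ne_zero
  rw [Ring.inverse_eq_inv]
  congr 1
  field_simp
  simp only [Fintype.card_fin, Nat.reduceSub]
  field_simp
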